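/- With the setup of σ-conductance, for a discrete community c ∈ {0,1}ⁿ (with positive volume) the gradient satisfies ∇φ_σ(c)_i = (w_i/a_{cV})·( a_{cc}/a_{cV} + (1 − 2c_i)σ − 2a_{ic}/w_i ), where a_{ic} = (Ac)_i, a_{cc} = cᵀAc, a_{cV} = Σⱼ cⱼwⱼ. -/

import Mathlib

open Finset

/-- degree / weight of node `i`. -/
noncomputable def w {n : ℕ} (A : Matrix (Fin n) (Fin n) ℝ) (i : Fin n) : ℝ := ∑ j, A i j

/-- σ-conductance as a function of a real membership vector. -/
noncomputable def phiSigma {n : ℕ} (A : Matrix (Fin n) (Fin n) ℝ) (σ : ℝ) (c : Fin n → ℝ) : ℝ :=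
  1 - (∑ i, ∑ j, c i * A i j * c j) / (∑ i, c i * w A i)
    - σ * (∑ i, (c i) ^ 2 * w A i) / (∑ i, c i * w A i)

/-- the gradient of σ-conductance at a discrete community. -/
theorem stmt_3 {n : ℕ} (A : Matrix (Fin n) (Fin n) ℝ)
    (hsym : ∀ i j, A i j = A j i) (hnonneg : ∀ i j, 0 ≤ A i j)
    (hw : ∀ i, 0 < w A i)
    (σ : ℝ) (c : Fin n → ℝ) (hdisc : ∀ i, c i = 0 ∨ c i = 1)
    (hvol : 0 < ∑ j, c j * w A j) (i : Fin n) :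
    HasDerivAt (fun t => phiSigma A σ (Function.update c i t))
      (w A i / (∑ j, c j * w A j) *
        ((∑ k, ∑ j, c k * A k j * c j) / (∑ j, c j * w A j)
          + (1 - 2 * c i) * σ - 2 * (∑ j, A i j * c j) / w A i))
      (c i) := by
  set wi := w A i with hwi
  set aV := ∑ j, c j * w A j with haV
  set aic := ∑ j, A i j * c j with haic
  set acc := ∑ k, ∑ j, c k * A k j * c j with hacc
  have hwipos := hw i
  set δ : Fin n → ℝ := fun j => if j = i then 1 else 0 with hδ
  have hu : ∀ (t : ℝ) (j : Fin n), Function.update c i t j = c j + (t - c i) * δ j := by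
    intro t j
    rcases eq_or_ne j i with rfl | h
    · simp [hδ]
    · simp [Function.update_of_ne h, hδ, h]
  -- denominator sum
  have hDsum : ∀ t : ℝ, (∑ j, Function.update c i t j * w A j) = aV + (t - c i) * wi := by
    intro t
    simp only [hu]
    have : ∀ j, (c j + (t - c i) * δ j) * w A j
        = c j * w A j + (t - c i) * (δ j * w A j) := by intro j; ring
    simp only [this, Finset.sum_add_distrib, ← Finset.mul_sum]
    simp [hδ, ite_mul, Finset.sum_ite_eq', hwi, haV]
  -- sum of squares
  have hcsq : (∑ j, (c j) ^ 2 * w A j) = aV := by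
    rw [haV]
    refine Finset.sum_congr rfl fun j _ => ?_
    rcases hdisc j with h | h <;> simp [h]
  have hSsum : ∀ t : ℝ, (∑ j, (Function.update c i t j) ^ 2 * w A j)
      = aV + (t ^ 2 - (c i) ^ 2) * wi := by
    intro t
    simp only [hu]
    have : ∀ j, (c j + (t - c i) * δ j) ^ 2 * w A j
        = (c j) ^ 2 * w A j + (t - c i) * (δ j * ((2 * c j + (t - c i) * δ j) * w A j)) := by
      intro j; ring
    simp only [this, Finset.sum_add_distrib, ← Finset.mul_sum, hcsq]
    simp only [hδ, ite_mul, one_mul, zero_mul, Finset.sum_ite_eq', Finset.mem_univ, if_true]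
    ring
  -- quadratic form sum
  have hAci : (∑ k, c k * A k i) = aic := by
    rw [haic]
    exact Finset.sum_congr rfl fun k _ => by rw [hsym k i]; ring
  have hNsum : ∀ t : ℝ, (∑ k, ∑ j, Function.update c i t k * A k j * Function.update c i t j)
      = acc + 2 * (t - c i) * aic + (t - c i) ^ 2 * A i i := by
    intro t
    simp only [hu]
    have : ∀ k j, (c k + (t - c i) * δ k) * A k j * (c j + (t - c i) * δ j)
        = c k * A k j * c j + δ k * ((t - c i) * (A k j * c j))
          + δ j * ((t - c i) * (c k * A k j)) + δ k * (δ j * ((t - c i) ^ 2 * A k j)) := by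
      intro k j; ring
    simp only [this, Finset.sum_add_distrib, ← Finset.mul_sum]
    simp only [hδ, ite_mul, one_mul, zero_mul, Finset.sum_ite_eq', Finset.mem_univ, if_true]
    simp only [← Finset.mul_sum, hAci, ← haic, ← hacc]
    ring
  have hne : aV + (c i - c i) * wi ≠ 0 := by simp; linarith
  -- rewrite the function
  have hfun : (fun t => phiSigma A σ (Function.update c i t))
      = fun t => 1 - (acc + 2 * (t - c i) * aic + (t - c i) ^ 2 * A i i) / (aV + (t - c i) * wi)
          - σ * (aV + (t ^ 2 - (c i) ^ 2) * wi) / (aV + (t - c i) * wi) := by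
    funext t
    simp only [phiSigma, hDsum t, hSsum t, hNsum t]
  rw [hfun]
  have h1 : HasDerivAt (fun t : ℝ => t - c i) 1 (c i) := (hasDerivAt_id _).sub_const _
  have hD : HasDerivAt (fun t : ℝ => aV + (t - c i) * wi) wi (c i) := by
    simpa using (h1.mul_const wi).const_add aV
  have hN : HasDerivAt (fun t : ℝ => acc + 2 * (t - c i) * aic + (t - c i) ^ 2 * A i i)
      (2 * aic) (c i) := by
    have h2 : HasDerivAt (fun t : ℝ => 2 * (t - c i) * aic) (2 * aic) (c i) := by
      simpa using ((h1.const_mul 2).mul_const aic)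
    have h3 : HasDerivAt (fun t : ℝ => (t - c i) ^ 2 * A i i) 0 (c i) := by
      have := (h1.pow 2).mul_const (A i i)
      refine this.congr_deriv ?_
      simp
    simpa using (h2.const_add acc).fun_add h3
  have hS : HasDerivAt (fun t : ℝ => σ * ((aV + (t ^ 2 - (c i) ^ 2) * wi)))
      (σ * (2 * c i * wi)) (c i) := by
    have : HasDerivAt (fun t : ℝ => aV + (t ^ 2 - (c i) ^ 2) * wi) (2 * c i * wi) (c i) := by
      have := (((hasDerivAt_pow 2 (c i)).sub_const ((c i) ^ 2)).mul_const wi).const_add aV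
      refine this.congr_deriv ?_
      ring
    exact this.const_mul σ
  have hNd := hN.div hD hne
  have hSd := hS.div hD hne
  have := (hNd.const_sub 1).sub hSd
  refine this.congr_deriv ?_
  have haVne : aV ≠ 0 := ne_of_gt hvol
  have hwine : wi ≠ 0 := ne_of_gt hwipos
  simp only [sub_self, zero_mul, add_zero, zero_pow, mul_zero]
  field_simp
  ring
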